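/- Let G = (V,E) be a finite simple graph, k ≥ 1 an integer, and u, v two adjacent large-dense vertices of G with N(u) ∪ {u} = N(v) ∪ {v}. If X is a feasible solution for (G,k) with u ∈ X and v ∉ X, then X \ {u} is also a feasible solution for (G,k). -/

import Mathlib

open SimpleGraph

/-- The number of edges of `G` with both endpoints in the neighborhood of `v`. -/
noncomputable def rho {V : Type*} (G : SimpleGraph V) (v : V) : ℕ :=
  {e : Sym2 V | e ∈ G.edgeSet ∧ ∀ x ∈ e, G.Adj v x}.ncard

/-- `v` is large-sparse: `|N(v)| > 7k` and `ρ(v) ≤ |N(v)|(|N(v)|−1)/4`. -/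
def LargeSparse {V : Type*} (G : SimpleGraph V) (k : ℕ) (v : V) : Prop :=
  7 * k < (G.neighborSet v).ncard ∧
    4 * rho G v ≤ (G.neighborSet v).ncard * ((G.neighborSet v).ncard - 1)

/-- `v` is large-dense: `|N(v)| > 7k` and `ρ(v) > |N(v)|(|N(v)|−1)/4`. -/
def LargeDense {V : Type*} (G : SimpleGraph V) (k : ℕ) (v : V) : Prop :=
  7 * k < (G.neighborSet v).ncard ∧
    (G.neighborSet v).ncard * ((G.neighborSet v).ncard - 1) < 4 * rho G v

/-- The connected component `c` of `H` is a clique. -/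
def CompIsClique {W : Type*} (H : SimpleGraph W) (c : H.ConnectedComponent) : Prop :=
  H.IsClique c.supp

/-- The connected component `c` of `H` is a tree. -/
def CompIsTree {W : Type*} (H : SimpleGraph W) (c : H.ConnectedComponent) : Prop :=
  (H.induce c.supp).IsTree

/-- Every connected component of `H` is a clique or a tree. -/
def CliquesOrTrees {W : Type*} (H : SimpleGraph W) : Prop :=
  ∀ c : H.ConnectedComponent, CompIsClique H c ∨ CompIsTree H c

/-- `X` is a feasible solution for `(G, k)`: `|X| ≤ k` and every connected component of
`G − X` is a clique or a tree. -/
def IsFeasible {V : Type*} (G : SimpleGraph V) (k : ℕ) (X : Set V) : Prop :=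
  X.ncard ≤ k ∧ CliquesOrTrees (G.induce (Xᶜ : Set V))

lemma tree_iso {W W' : Type*} {H : SimpleGraph W} {H' : SimpleGraph W'} (e : H ≃g H')
    (h : H.IsTree) : H'.IsTree := by
  constructor
  · exact (Iso.connected_iff e).mp h.isConnected
  · intro w p hp
    exact h.IsAcyclic (p.map e.symm.toHom)
      ((Walk.map_isCycle_iff_of_injective e.symm.injective).mpr hp)

lemma dense_not_indep {V : Type*} [Fintype V] (G : SimpleGraph V) (k : ℕ)
    (v : V) (hv : LargeDense G k v) (X : Set V) (hXk : X.ncard ≤ k)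
    (hind : ∀ a b : V, G.Adj v a → G.Adj v b → a ∉ X → b ∉ X → ¬ G.Adj a b) : False := by
  classical
  set n := (G.neighborSet v).ncard with hn
  set E := {e : Sym2 V | e ∈ G.edgeSet ∧ ∀ x ∈ e, G.Adj v x} with hE
  have hEfin : E.Finite := Set.toFinite _
  have hXNfin : (X ∩ G.neighborSet v).Finite := Set.toFinite _
  have hNfin : (G.neighborSet v).Finite := Set.toFinite _
  set s : Finset (Sym2 V) := hEfin.toFinset with hs
  set t : Finset V := hXNfin.toFinset with ht
  have hEx : ∀ e ∈ s, ∃ x ∈ e, x ∈ X := by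
    intro e he
    rw [hs, Set.Finite.mem_toFinset] at he
    induction e with
    | _ a b =>
      by_cases ha : a ∈ X
      · exact ⟨a, by simp, ha⟩
      by_cases hb : b ∈ X
      · exact ⟨b, by simp, hb⟩
      exact absurd (G.mem_edgeSet.mp he.1)
        (hind a b (he.2 a (by simp)) (he.2 b (by simp)) ha hb)
  set f : Sym2 V → V := fun e => if h : ∃ x ∈ e, x ∈ X then h.choose else v with hf
  have hmaps : ∀ e ∈ s, f e ∈ t := by
    intro e he
    have h := hEx e he
    have h1 : f e ∈ e ∧ f e ∈ X := by
      rw [hf]; simp only [h, dif_pos]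
      exact ⟨h.choose_spec.1, h.choose_spec.2⟩
    rw [ht, Set.Finite.mem_toFinset]
    have he' := (Set.Finite.mem_toFinset hEfin).mp he
    exact ⟨h1.2, he'.2 _ h1.1⟩
  have hfiber : ∀ x ∈ t, (s.filter fun e => f e = x).card ≤ n := by
    intro x hx
    have hsub : (s.filter fun e => f e = x) ⊆ hNfin.toFinset.image (fun y => s(x, y)) := by
      intro e he
      rw [Finset.mem_filter] at he
      obtain ⟨hes, hfe⟩ := he
      have he' := (Set.Finite.mem_toFinset hEfin).mp hes
      have hxe : x ∈ e := by
        have h := hEx e hes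
        rw [hf] at hfe; simp only [h, dif_pos] at hfe
        exact hfe ▸ h.choose_spec.1
      induction e with
      | _ a b =>
        rw [Finset.mem_image]
        rcases Sym2.mem_iff.mp hxe with rfl | rfl
        · exact ⟨b, (Set.Finite.mem_toFinset hNfin).mpr (he'.2 b (by simp)), rfl⟩
        · exact ⟨a, (Set.Finite.mem_toFinset hNfin).mpr (he'.2 a (by simp)), by
            rw [Sym2.eq_swap]⟩
    calc (s.filter fun e => f e = x).card ≤ (hNfin.toFinset.image (fun y => s(x, y))).card :=
          Finset.card_le_card hsub
      _ ≤ hNfin.toFinset.card := Finset.card_image_le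
      _ = n := by rw [hn, Set.ncard_eq_toFinset_card _ hNfin]
  have hcount : s.card ≤ t.card * n := by
    rw [Finset.card_eq_sum_card_fiberwise hmaps]
    calc (∑ x ∈ t, (s.filter fun e => f e = x).card) ≤ t.card • n :=
          Finset.sum_le_card_nsmul t _ n hfiber
      _ = t.card * n := by rw [smul_eq_mul]
  have htk : t.card ≤ k := by
    rw [ht, ← Set.ncard_eq_toFinset_card _ hXNfin]
    exact le_trans (Set.ncard_le_ncard Set.inter_subset_left X.toFinite) hXk
  have hrho : rho G v = s.card := by
    rw [hs, ← Set.ncard_eq_toFinset_card _ hEfin]; rfl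
  have h2 := hv.2
  rw [hrho] at h2
  have h3 : n * (n - 1) < n * (4 * k) := by
    calc n * (n-1) < 4 * s.card := h2
      _ ≤ 4 * (t.card * n) := by omega
      _ ≤ 4 * (k * n) := by
          have := Nat.mul_le_mul_right n htk; omega
      _ = n * (4 * k) := by ring
  have h4 : n - 1 < 4 * k := Nat.lt_of_mul_lt_mul_left h3
  have h5 := hv.1
  omega

/-- if `u` and `v` are adjacent large-dense vertices with the same closed
neighborhood and `X` is a feasible solution for `(G,k)` with `u ∈ X` and `v ∉ X`,
then `X \ {u}` is also a feasible solution for `(G,k)`. -/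
theorem stmt_13 {V : Type*} [Fintype V] (G : SimpleGraph V) (k : ℕ) (hk : 1 ≤ k)
    (u v : V) (hu : LargeDense G k u) (hv : LargeDense G k v) (huv : G.Adj u v)
    (hnbhd : G.neighborSet u ∪ {u} = G.neighborSet v ∪ {v})
    (X : Set V) (hX : IsFeasible G k X) (huX : u ∈ X) (hvX : v ∉ X) :
    IsFeasible G k (X \ {u}) := by
  classical
  obtain ⟨hXk, hct⟩ := hX
  have hvXc : v ∈ (Xᶜ : Set V) := hvX
  set H : SimpleGraph ↥(Xᶜ : Set V) := G.induce (Xᶜ : Set V) with hH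
  set vv : ↥(Xᶜ : Set V) := ⟨v, hvXc⟩ with hvv
  set C : H.ConnectedComponent := H.connectedComponentMk vv with hC
  -- closed neighborhood facts
  have hvu : G.Adj v u := huv.symm
  have hcl1 : ∀ z, G.Adj u z → z = v ∨ G.Adj v z := by
    intro z hz
    have : z ∈ G.neighborSet v ∪ {v} := hnbhd ▸ (Set.mem_union_left _ hz)
    rcases this with h | h
    · exact Or.inr h
    · exact Or.inl h
  have hcl2 : ∀ z, G.Adj v z → z = u ∨ G.Adj u z := by
    intro z hz
    have : z ∈ G.neighborSet u ∪ {u} := hnbhd ▸ (Set.mem_union_left _ hz)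
    rcases this.symm with h | h
    · exact Or.inl h
    · exact Or.inr h
  -- Step 1: the component of v is a clique
  have hclique : H.IsClique C.supp := by
    rcases hct C with h | h
    · exact h
    · exfalso
      refine dense_not_indep G k v hv X hXk ?_
      intro a b hva hvb haX hbX hab
      set va : ↥(Xᶜ : Set V) := ⟨a, haX⟩ with hva'
      set vb : ↥(Xᶜ : Set V) := ⟨b, hbX⟩ with hvb'
      have hHva : H.Adj vv va := by simp [hH, comap_adj, hva]; exact hva
      have hHvb : H.Adj vv vb := by simp [hH, comap_adj, hvb]; exact hvb
      have hHab : H.Adj va vb := by simp [hH, comap_adj, hab]; exact hab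
      have hmemv : vv ∈ C.supp := by rw [ConnectedComponent.mem_supp_iff]
      have hmema : va ∈ C.supp := by
        rw [ConnectedComponent.mem_supp_iff, hC]
        exact ConnectedComponent.sound hHva.reachable.symm
      have hmemb : vb ∈ C.supp := by
        rw [ConnectedComponent.mem_supp_iff, hC]
        exact ConnectedComponent.sound hHvb.reachable.symm
      set A : ↥C.supp := ⟨va, hmema⟩ with hA
      set B : ↥C.supp := ⟨vb, hmemb⟩ with hB
      set W : ↥C.supp := ⟨vv, hmemv⟩ with hW
      have hAB : (H.induce C.supp).Adj A B := by simp [comap_adj, hA, hB, hHab]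
      have hAW : (H.induce C.supp).Adj A W := by simp [comap_adj, hA, hW, hHva.symm]
      have hWB : (H.induce C.supp).Adj W B := by simp [comap_adj, hW, hB, hHvb]
      have hANeB : A ≠ B := by
        intro hEq
        exact hab.ne (congrArg (fun x => (x.1 : V)) hEq)
      set p1 : (H.induce C.supp).Path A B := Path.singleton hAB with hp1
      have hp2path : (Walk.cons hAW (Walk.cons hWB Walk.nil)).IsPath := by
        rw [Walk.isPath_def]
        simp only [Walk.support_cons, Walk.support_nil]
        simp [List.nodup_cons, hAW.ne, hANeB, hWB.ne]
      set p2 : (H.induce C.supp).Path A B := ⟨Walk.cons hAW (Walk.cons hWB Walk.nil), hp2path⟩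
      have := h.IsAcyclic.path_unique p1 p2
      have hlen : (p1 : (H.induce C.supp).Walk A B).length =
          (p2 : (H.induce C.supp).Walk A B).length := by rw [this]
      simp [hp1, Path.singleton] at hlen
      simp [p2] at hlen
  -- Step 2: characterize the support of C
  set K : Set V := insert v (G.neighborSet v ∩ Xᶜ) with hK
  have hKsub : K ⊆ (Xᶜ : Set V) := by
    rintro w (rfl | hw)
    · exact hvXc
    · exact hw.2
  have hCK : ∀ w : ↥(Xᶜ : Set V), w ∈ C.supp → (w : V) ∈ K := by
    intro w hw
    by_cases hwv : w = vv
    · rw [hwv]; exact Set.mem_insert _ _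
    · have hmemv : vv ∈ C.supp := by rw [ConnectedComponent.mem_supp_iff]
      have hadj := hclique hmemv hw (Ne.symm hwv)
      have : G.Adj v (w : V) := hadj
      exact Set.mem_insert_iff.mpr (Or.inr ⟨this, w.2⟩)
  have hKC : ∀ w : V, (h : w ∈ K) → (⟨w, hKsub h⟩ : ↥(Xᶜ : Set V)) ∈ C.supp := by
    intro w h
    rcases h with h | h
    · subst h; rw [ConnectedComponent.mem_supp_iff]
    · rw [ConnectedComponent.mem_supp_iff, hC]
      have hadj : H.Adj vv ⟨w, hKsub (Or.inr h)⟩ := h.1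
      exact ConnectedComponent.sound hadj.reachable.symm
  -- Step 3: setup for Y
  set Y : Set V := X \ {u} with hY
  have hYc : (Yᶜ : Set V) = Xᶜ ∪ {u} := by
    ext z; simp [hY]; tauto
  have hsub : (Xᶜ : Set V) ⊆ Yᶜ := by rw [hYc]; exact Set.subset_union_left
  have huY : u ∈ (Yᶜ : Set V) := by rw [hYc]; exact Set.mem_union_right _ rfl
  set H' : SimpleGraph ↥(Yᶜ : Set V) := G.induce (Yᶜ : Set V) with hH'
  set uu : ↥(Yᶜ : Set V) := ⟨u, huY⟩ with huu
  set S : Set V := insert u K with hS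
  have hmemYc : ∀ z : ↥(Yᶜ : Set V), (z : V) = u ∨ (z : V) ∈ (Xᶜ : Set V) := by
    intro z
    have h2 : (z : V) ∈ Xᶜ ∪ {u} := (Set.ext_iff.mp hYc (z : V)).mp z.2
    rcases h2 with h | h
    · exact Or.inr h
    · exact Or.inl h
  -- closure of S under H'-adjacency
  have hclose : ∀ a b : ↥(Yᶜ : Set V), H'.Adj a b → (a : V) ∈ S → (b : V) ∈ S := by
    intro a b hab haS
    have hGab : G.Adj (a : V) (b : V) := hab
    rcases hmemYc b with hbu | hbX
    · rw [hbu]; exact Set.mem_insert _ _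
    rcases haS with hau | haK
    · -- a = u
      rcases hcl1 (b : V) (hau ▸ hGab) with h | h
      · exact Set.mem_insert_iff.mpr (Or.inr (h ▸ Set.mem_insert _ _))
      · exact Set.mem_insert_iff.mpr (Or.inr (Set.mem_insert_iff.mpr (Or.inr ⟨h, hbX⟩)))
    · -- a ∈ K, so a ∈ C.supp
      have haC := hKC (a : V) haK
      have haXc : (a : V) ∈ (Xᶜ : Set V) := hKsub haK
      have hHab : H.Adj ⟨(a : V), haXc⟩ ⟨(b : V), hbX⟩ := hGab
      have hbC : (⟨(b : V), hbX⟩ : ↥(Xᶜ : Set V)) ∈ C.supp := by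
        rw [ConnectedComponent.mem_supp_iff]
        rw [ConnectedComponent.mem_supp_iff] at haC
        rw [← haC]
        exact ConnectedComponent.sound hHab.reachable.symm
      exact Set.mem_insert_iff.mpr (Or.inr (hCK _ hbC))
  -- every vertex reachable from uu is in S
  have hwalkS : ∀ (a b : ↥(Yᶜ : Set V)) (p : H'.Walk a b), (a : V) ∈ S → (b : V) ∈ S := by
    intro a b p
    induction p with
    | nil => exact id
    | cons h q ih => exact fun ha => ih (hclose _ _ h ha)
  -- membership in K gives adjacency facts to u
  have hKadjU : ∀ w : V, w ∈ K → G.Adj u w := by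
    intro w hw
    rcases hw with rfl | hw
    · exact huv
    · rcases hcl2 w hw.1 with h | h
      · exact absurd huX (h ▸ hw.2)
      · exact h
  -- clique within K
  have hKclique : ∀ a b : V, a ∈ K → b ∈ K → a ≠ b → G.Adj a b := by
    intro a b ha hb hne
    have haC := hKC a ha
    have hbC := hKC b hb
    have := hclique haC hbC (by intro h; exact hne (congrArg Subtype.val h))
    exact this
  constructor
  · exact le_trans (Set.ncard_le_ncard Set.diff_subset X.toFinite) hXk
  · intro c'
    by_cases hmem : uu ∈ c'.supp
    · -- component containing u : show it is a clique
      left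
      intro a ha b hb hne
      have hac : c' = H'.connectedComponentMk uu := by
        rw [ConnectedComponent.mem_supp_iff] at hmem; exact hmem.symm
      have haS : (a : V) ∈ S := by
        rw [ConnectedComponent.mem_supp_iff, hac] at ha
        obtain ⟨p⟩ := (ConnectedComponent.exact ha).symm
        exact hwalkS uu a p (Set.mem_insert _ _)
      have hbS : (b : V) ∈ S := by
        rw [ConnectedComponent.mem_supp_iff, hac] at hb
        obtain ⟨p⟩ := (ConnectedComponent.exact hb).symm
        exact hwalkS uu b p (Set.mem_insert _ _)
      have hneV : (a : V) ≠ (b : V) := fun h => hne (Subtype.ext h)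
      have hGadj : G.Adj (a : V) (b : V) := by
        rcases haS with hau | haK
        · rcases hbS with hbu | hbK
          · exact absurd (hau.trans hbu.symm) hneV
          · exact hau ▸ hKadjU _ hbK
        · rcases hbS with hbu | hbK
          · exact hbu ▸ (hKadjU _ haK).symm
          · exact hKclique _ _ haK hbK hneV
      exact hGadj
    · -- component not containing u
      obtain ⟨w, hw0⟩ := c'.exists_rep
      have hc'' : H'.connectedComponentMk w = c' := hw0
      have hwmem : w ∈ c'.supp := by rw [ConnectedComponent.mem_supp_iff]; exact hc''
      have hwu : (w : V) ≠ u := by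
        intro h
        apply hmem
        have hweq : w = uu := Subtype.ext h
        rw [← hweq]
        exact hwmem
      have hwXc : (w : V) ∈ (Xᶜ : Set V) := by
        rcases hmemYc w with h | h
        · exact absurd h hwu
        · exact h
      set w' : ↥(Xᶜ : Set V) := ⟨(w : V), hwXc⟩ with hw'
      set d : H.ConnectedComponent := H.connectedComponentMk w' with hd
      set incl : ↥(Xᶜ : Set V) → ↥(Yᶜ : Set V) := fun z => ⟨(z : V), hsub z.2⟩ with hincl
      have hall : ∀ z : ↥(Yᶜ : Set V), z ∈ c'.supp → (z : V) ∈ (Xᶜ : Set V) := by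
        intro z hz
        rcases hmemYc z with h | h
        · exfalso
          apply hmem
          have hzeq : z = uu := Subtype.ext h
          rw [← hzeq]
          exact hz
        · exact h
      -- walk transfer H' → H
      have hT2 : ∀ (a b : ↥(Yᶜ : Set V)) (p : H'.Walk a b), a ∈ c'.supp →
          ∀ (ha : (a : V) ∈ (Xᶜ : Set V)) (hb : (b : V) ∈ (Xᶜ : Set V)),
          H.Reachable ⟨a, ha⟩ ⟨b, hb⟩ := by
        intro a b p
        induction p with
        | nil => intro _ ha hb; exact Reachable.refl _
        | cons h q ih =>
          intro hsupp ha hb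
          rename_i x y _
          have hy : y ∈ c'.supp := by
            rw [ConnectedComponent.mem_supp_iff]
            rw [ConnectedComponent.mem_supp_iff] at hsupp
            rw [← hsupp]
            exact ConnectedComponent.sound h.reachable.symm
          have hyX := hall y hy
          have hHxy : H.Adj ⟨x, ha⟩ ⟨y, hyX⟩ := h
          exact hHxy.reachable.trans (ih hy hyX hb)
      -- reachability transfer H → H'
      have hT1 : ∀ (a b : ↥(Xᶜ : Set V)), H.Reachable a b →
          H'.Reachable (incl a) (incl b) := by
        intro a b hr
        obtain ⟨p⟩ := hr
        induction p with
        | nil => exact Reachable.refl _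
        | cons h q ih =>
          rename_i x y _
          have hH'xy : H'.Adj (incl x) (incl y) := h
          exact hH'xy.reachable.trans ih
      -- support correspondence
      have hsupp_eq : c'.supp = incl '' d.supp := by
        ext z
        constructor
        · intro hz
          have hzX := hall z hz
          have hzc : H'.connectedComponentMk z = c' := by
            rw [ConnectedComponent.mem_supp_iff] at hz; exact hz
          obtain ⟨p⟩ := ConnectedComponent.exact (hzc.trans hc''.symm)
          have hr := hT2 z w p hz hzX hwXc
          refine ⟨⟨z, hzX⟩, ?_, Subtype.ext rfl⟩
          rw [ConnectedComponent.mem_supp_iff, hd]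
          exact ConnectedComponent.sound hr
        · rintro ⟨z0, hz0, rfl⟩
          rw [ConnectedComponent.mem_supp_iff]
          rw [ConnectedComponent.mem_supp_iff, hd] at hz0
          have hr := hT1 z0 w' (ConnectedComponent.exact hz0)
          have hiw : incl w' = w := Subtype.ext rfl
          rw [hiw] at hr
          exact (ConnectedComponent.sound hr).trans hc''
      rcases hct d with hdc | hdt
      · -- clique case
        left
        intro a ha b hb hne
        rw [hsupp_eq] at ha hb
        obtain ⟨a0, ha0, rfl⟩ := ha
        obtain ⟨b0, hb0, rfl⟩ := hb
        have hne0 : a0 ≠ b0 := by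
          intro h; exact hne (by rw [h])
        have hadj := hdc ha0 hb0 hne0
        exact (hadj : G.Adj (a0 : V) (b0 : V))
      · -- tree case
        right
        refine tree_iso ?_ hdt
        refine ⟨?_, ?_⟩
        · -- the equivalence
          refine ⟨fun z => ⟨incl z.1, by rw [hsupp_eq]; exact ⟨z.1, z.2, rfl⟩⟩,
            fun z => ⟨⟨(z.1 : V), hall z.1 z.2⟩, ?_⟩, ?_, ?_⟩
          · have hz2 : (z : ↥(Yᶜ : Set V)) ∈ incl '' d.supp :=
              (Set.ext_iff.mp hsupp_eq _).mp z.2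
            obtain ⟨z0, hz0, hz0e⟩ := hz2
            have hzeq : z0 = ⟨(z.1 : V), hall z.1 z.2⟩ := by
              apply Subtype.ext
              show (z0 : V) = ((z : ↥(Yᶜ : Set V)) : V)
              rw [← hz0e]
            rw [← hzeq]; exact hz0
          · intro z
            apply Subtype.ext; apply Subtype.ext; rfl
          · intro z
            apply Subtype.ext; apply Subtype.ext; rfl
        · intro a b
          constructor
          · intro h; exact h
          · intro h; exact h
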